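/- Under the hypotheses of the subgradient bound (convex $F$ with minimizer $x^*$, subgradient norms bounded by $G$, positive step sizes $\phi_n$ with $\sum_{n=0}^\infty \phi_n = \infty$ and $\sum_{n=0}^\infty \phi_n^2 < \infty$), the best function value converges: $\min_{0 \le i \le n} F(x^{(i)}) \to F(x^*)$ as $n \to \infty$. -/

import Mathlib

open Finset Filter

theorem subgradient_method_convergence
    (n' : ℕ)
    (F : EuclideanSpace ℝ (Fin n') → ℝ)
    (hF : ConvexOn ℝ Set.univ F)
    (xstar : EuclideanSpace ℝ (Fin n'))
    (hmin : ∀ y, F xstar ≤ F y)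
    (x g : ℕ → EuclideanSpace ℝ (Fin n'))
    (φ : ℕ → ℝ) (hφ : ∀ i, 0 < φ i)
    (G : ℝ)
    (hsub : ∀ i, ∀ y, F (x i) + inner ℝ (g i) (y - x i) ≤ F y)
    (hG : ∀ i, ‖g i‖ ≤ G)
    (hiter : ∀ i, x (i + 1) = x i - φ i • g i)
    (hdiv : ¬ Summable φ)
    (hsq : Summable (fun i => φ i ^ 2)) :
    Tendsto (fun n => (Finset.range (n + 1)).inf' (by simp) (fun i => F (x i)))
      atTop (nhds (F xstar)) := by
  have hGnn : 0 ≤ G := le_trans (norm_nonneg _) (hG 0)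
  set C : ℝ := ‖x 0 - xstar‖ ^ 2 + G ^ 2 * (∑' i, φ i ^ 2) with hC
  have key : ∀ i, ‖x (i + 1) - xstar‖ ^ 2 ≤
      ‖x i - xstar‖ ^ 2 - 2 * φ i * (F (x i) - F xstar) + φ i ^ 2 * G ^ 2 := by
    intro i
    have h1 : x (i + 1) - xstar = (x i - xstar) - φ i • g i := by
      rw [hiter]; abel
    rw [h1, @norm_sub_sq_real]
    have h2 : (inner ℝ (x i - xstar) (φ i • g i) : ℝ) =
        φ i * (inner ℝ (g i) (x i - xstar) : ℝ) := by
      rw [real_inner_smul_right, real_inner_comm]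
    have h3 : F (x i) - F xstar ≤ (inner ℝ (g i) (x i - xstar) : ℝ) := by
      have h := hsub i xstar
      have h4 : (inner ℝ (g i) (xstar - x i) : ℝ) = - inner ℝ (g i) (x i - xstar) := by
        rw [← inner_neg_right]; congr 1; abel
      rw [h4] at h; linarith
    have h5 : ‖φ i • g i‖ ^ 2 ≤ φ i ^ 2 * G ^ 2 := by
      rw [norm_smul, mul_pow, Real.norm_eq_abs, sq_abs]
      have : ‖g i‖ ^ 2 ≤ G ^ 2 := by nlinarith [norm_nonneg (g i), hG i]
      nlinarith [sq_nonneg (φ i)]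
    rw [h2]
    nlinarith [(hφ i).le]
  have sumkey : ∀ m, ∑ i ∈ range m, 2 * φ i * (F (x i) - F xstar) ≤
      ‖x 0 - xstar‖ ^ 2 - ‖x m - xstar‖ ^ 2 + G ^ 2 * ∑ i ∈ range m, φ i ^ 2 := by
    intro m
    induction m with
    | zero => simp
    | succ m ih =>
      rw [Finset.sum_range_succ, Finset.sum_range_succ]
      have := key m
      nlinarith
  have sumC : ∀ m, ∑ i ∈ range m, 2 * φ i * (F (x i) - F xstar) ≤ C := by
    intro m
    have h1 : ∑ i ∈ range m, φ i ^ 2 ≤ ∑' i, φ i ^ 2 :=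
      Summable.sum_le_tsum (range m) (fun i _ => sq_nonneg _) hsq
    have := sumkey m
    nlinarith [sq_nonneg ‖x m - xstar‖, sq_nonneg G]
  set a : ℕ → ℝ := fun n => (Finset.range (n + 1)).inf' (by simp) (fun i => F (x i))
    with ha
  set S : ℕ → ℝ := fun m => ∑ i ∈ range m, φ i with hS
  have hSpos : ∀ n, 0 < S (n + 1) := fun n =>
    Finset.sum_pos (fun i _ => hφ i) (by simp)
  have hlow : ∀ n, F xstar ≤ a n := fun n =>
    Finset.le_inf' _ _ (fun i _ => hmin (x i))
  have hup : ∀ n, a n ≤ F xstar + C / (2 * S (n + 1)) := by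
    intro n
    have h1 : (a n - F xstar) * (2 * S (n + 1)) ≤ C := by
      have h2 : (a n - F xstar) * (2 * S (n + 1)) =
          ∑ i ∈ range (n + 1), 2 * φ i * (a n - F xstar) := by
        have hm : (2:ℝ) * ∑ i ∈ range (n + 1), φ i =
            ∑ i ∈ range (n + 1), 2 * φ i := by rw [Finset.mul_sum]
        rw [hS, hm, Finset.mul_sum]
        exact Finset.sum_congr rfl fun i _ => by ring
      have h3 : ∑ i ∈ range (n + 1), 2 * φ i * (a n - F xstar) ≤
          ∑ i ∈ range (n + 1), 2 * φ i * (F (x i) - F xstar) := by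
        apply Finset.sum_le_sum
        intro i hi
        have : a n ≤ F (x i) := Finset.inf'_le _ hi
        nlinarith [(hφ i).le]
      calc (a n - F xstar) * (2 * S (n + 1)) = _ := h2
        _ ≤ _ := h3
        _ ≤ C := sumC (n + 1)
      
    have h4 : 0 < 2 * S (n + 1) := by linarith [hSpos n]
    have := (le_div_iff₀ h4).mpr h1
    linarith
  have hStop : Tendsto (fun n => S (n + 1)) atTop atTop := by
    have h1 : Tendsto S atTop atTop :=
      (not_summable_iff_tendsto_nat_atTop_of_nonneg (fun i => (hφ i).le)).mp hdiv
    exact h1.comp (tendsto_add_atTop_nat 1)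
  have hdiv0 : Tendsto (fun n => C / (2 * S (n + 1))) atTop (nhds 0) := by
    apply Tendsto.div_atTop tendsto_const_nhds
    exact Tendsto.const_mul_atTop (by norm_num) hStop
  have hupper : Tendsto (fun n => F xstar + C / (2 * S (n + 1))) atTop
      (nhds (F xstar)) := by
    simpa using hdiv0.const_add (F xstar)
  exact tendsto_of_tendsto_of_tendsto_of_le_of_le tendsto_const_nhds hupper hlow hup
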